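/- If the marginals of P and Q on coordinate j differ (P_{#j} ≠ Q_{#j}), then every coupling M of P and Q satisfies ∫ (x_j − y_j)² dM > 0; hence for w with w_j > 1 and all w_i ≥ 1, W_{c_w}(P,Q) > W_c(P,Q) whenever the infima are attained. -/

import Mathlib

open MeasureTheory

/-- Optimal transport cost: infimum over couplings of the expected cost. -/
noncomputable def transportCost {Z : Type*} [MeasurableSpace Z] (c : Z → Z → ℝ)
    (P Q : Measure Z) : ℝ :=
  sInf {r : ℝ | ∃ M : Measure (Z × Z), IsProbabilityMeasure M ∧
    M.map Prod.fst = P ∧ M.map Prod.snd = Q ∧ r = ∫ p, c p.1 p.2 ∂M}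

/-- If the `j`-th marginals of `P` and `Q` differ, every coupling `M` gives the
displacement `(x j - y j)^2` positive mass; hence for weights with all `w i ≥ 1`
and `w j > 1`, when the infimum defining `W_{c_w}(P,Q)` is attained, the weighted
transport cost strictly exceeds the unweighted one. -/
theorem strict_transport_separation {m : ℕ}
    (P Q : Measure (Fin m → ℝ)) [IsProbabilityMeasure P] [IsProbabilityMeasure Q]
    (j : Fin m) (hmarg : P.map (fun x => x j) ≠ Q.map (fun x => x j))
    (w : Fin m → ℝ) (hw : ∀ i, 1 ≤ w i) (hj : 1 < w j)
    (hattain : ∃ M : Measure ((Fin m → ℝ) × (Fin m → ℝ)),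
      IsProbabilityMeasure M ∧ M.map Prod.fst = P ∧ M.map Prod.snd = Q ∧
      Integrable (fun p => ∑ i, (w i) ^ 2 * (p.1 i - p.2 i) ^ 2) M ∧
      ∫ p, (∑ i, (w i) ^ 2 * (p.1 i - p.2 i) ^ 2) ∂M =
        transportCost (fun x y => ∑ i, (w i) ^ 2 * (x i - y i) ^ 2) P Q) :
    (∀ M : Measure ((Fin m → ℝ) × (Fin m → ℝ)), IsProbabilityMeasure M →
      M.map Prod.fst = P → M.map Prod.snd = Q →
      0 < ∫⁻ p, ENNReal.ofReal ((p.1 j - p.2 j) ^ 2) ∂M) ∧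
    transportCost (fun x y => ∑ i, (x i - y i) ^ 2) P Q <
      transportCost (fun x y => ∑ i, (w i) ^ 2 * (x i - y i) ^ 2) P Q := by
  -- weight facts
  have hw2 : ∀ i, (1:ℝ) ≤ (w i) ^ 2 := fun i => by nlinarith [hw i]
  -- Part 1
  have part1 : ∀ M : Measure ((Fin m → ℝ) × (Fin m → ℝ)), IsProbabilityMeasure M →
      M.map Prod.fst = P → M.map Prod.snd = Q →
      0 < ∫⁻ p, ENNReal.ofReal ((p.1 j - p.2 j) ^ 2) ∂M := by
    intro M hM h1 h2
    by_contra h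
    push_neg at h
    have h0 : ∫⁻ p, ENNReal.ofReal ((p.1 j - p.2 j) ^ 2) ∂M = 0 :=
      le_antisymm h zero_le
    have hmeas : Measurable fun p : (Fin m → ℝ) × (Fin m → ℝ) =>
        ENNReal.ofReal ((p.1 j - p.2 j) ^ 2) := by fun_prop
    rw [lintegral_eq_zero_iff hmeas] at h0
    have hae : (fun p : (Fin m → ℝ) × (Fin m → ℝ) => p.1 j) =ᵐ[M]
        (fun p => p.2 j) := by
      filter_upwards [h0] with p hp
      simp only [Pi.zero_apply, ENNReal.ofReal_eq_zero] at hp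
      nlinarith [sq_nonneg (p.1 j - p.2 j)]
    apply hmarg
    calc P.map (fun x => x j) = (M.map Prod.fst).map (fun x => x j) := by rw [h1]
      _ = M.map (fun p => p.1 j) := Measure.map_map (measurable_pi_apply j) measurable_fst
      _ = M.map (fun p => p.2 j) := Measure.map_congr hae
      _ = (M.map Prod.snd).map (fun x => x j) :=
          (Measure.map_map (measurable_pi_apply j) measurable_snd).symm
      _ = Q.map (fun x => x j) := by rw [h2]
  refine ⟨part1, ?_⟩
  obtain ⟨M, hM, h1, h2, hint, hopt⟩ := hattain
  set cw : (Fin m → ℝ) × (Fin m → ℝ) → ℝ :=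
    fun p => ∑ i, (w i) ^ 2 * (p.1 i - p.2 i) ^ 2 with hcw
  set c : (Fin m → ℝ) × (Fin m → ℝ) → ℝ :=
    fun p => ∑ i, (p.1 i - p.2 i) ^ 2 with hc
  set fj : (Fin m → ℝ) × (Fin m → ℝ) → ℝ := fun p => (p.1 j - p.2 j) ^ 2 with hfj
  have hc_nonneg : ∀ p, 0 ≤ c p := fun p =>
    Finset.sum_nonneg fun i _ => sq_nonneg _
  have hcw_nonneg : ∀ p, 0 ≤ cw p := fun p =>
    Finset.sum_nonneg fun i _ => mul_nonneg (sq_nonneg _) (sq_nonneg _)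
  have hc_le_cw : ∀ p, c p ≤ cw p := by
    intro p
    apply Finset.sum_le_sum
    intro i _
    nlinarith [hw2 i, sq_nonneg (p.1 i - p.2 i)]
  have hkey : ∀ p, c p + ((w j) ^ 2 - 1) * fj p ≤ cw p := by
    intro p
    have : ∑ i, ((w i) ^ 2 - 1) * (p.1 i - p.2 i) ^ 2 ≥
        ((w j) ^ 2 - 1) * (p.1 j - p.2 j) ^ 2 := by
      apply Finset.single_le_sum (f := fun i => ((w i) ^ 2 - 1) * (p.1 i - p.2 i) ^ 2)
        (fun i _ => mul_nonneg (by linarith [hw2 i]) (sq_nonneg _)) (Finset.mem_univ j)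
    have hexp : cw p - c p = ∑ i, ((w i) ^ 2 - 1) * (p.1 i - p.2 i) ^ 2 := by
      simp only [hcw, hc, ← Finset.sum_sub_distrib]
      congr 1; ext i; ring
    simp only [hfj]
    linarith
  have hfj_le : ∀ p, fj p ≤ cw p := by
    intro p
    show (p.1 j - p.2 j) ^ 2 ≤ ∑ i, (w i) ^ 2 * (p.1 i - p.2 i) ^ 2
    have h := Finset.single_le_sum (f := fun i => (w i) ^ 2 * (p.1 i - p.2 i) ^ 2)
      (fun i _ => mul_nonneg (sq_nonneg _) (sq_nonneg _)) (Finset.mem_univ j)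
    nlinarith [hw2 j, sq_nonneg (p.1 j - p.2 j)]
  have hmeasc : Measurable c := by fun_prop
  have hmeasfj : Measurable fj := by fun_prop
  have hintc : Integrable c M :=
    hint.mono' hmeasc.aestronglyMeasurable
      (Filter.Eventually.of_forall fun p => by
        rw [Real.norm_eq_abs, abs_of_nonneg (hc_nonneg p)]; exact hc_le_cw p)
  have hintfj : Integrable fj M :=
    hint.mono' hmeasfj.aestronglyMeasurable
      (Filter.Eventually.of_forall fun p => by
        rw [Real.norm_eq_abs, abs_of_nonneg (sq_nonneg _)]; exact hfj_le p)
  -- positivity of the real integral of fj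
  have hlintpos := part1 M hM h1 h2
  have hfjpos : 0 < ∫ p, fj p ∂M := by
    rw [integral_eq_lintegral_of_nonneg_ae
      (Filter.Eventually.of_forall fun p => sq_nonneg _) hmeasfj.aestronglyMeasurable]
    apply ENNReal.toReal_pos hlintpos.ne'
    have : ∫⁻ p, ENNReal.ofReal (fj p) ∂M ≤ ∫⁻ p, ‖fj p‖₊ ∂M := by
      apply lintegral_mono
      intro p
      show ENNReal.ofReal (fj p) ≤ (‖fj p‖₊ : ENNReal)
      rw [← Real.enorm_eq_ofReal (sq_nonneg _)]; exact le_rfl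
    exact (this.trans_lt hintfj.hasFiniteIntegral).ne
  -- comparison of integrals
  have hlt : ∫ p, c p ∂M < ∫ p, cw p ∂M := by
    have h1' : ∫ p, (c p + ((w j) ^ 2 - 1) * fj p) ∂M ≤ ∫ p, cw p ∂M :=
      integral_mono (hintc.add (hintfj.const_mul _)) hint hkey
    rw [integral_add hintc (hintfj.const_mul _), integral_const_mul] at h1'
    have hwj : 0 < (w j) ^ 2 - 1 := by nlinarith
    nlinarith [mul_pos hwj hfjpos]
  -- transportCost c ≤ ∫ c dM
  have hbdd : BddBelow {r : ℝ | ∃ M' : Measure ((Fin m → ℝ) × (Fin m → ℝ)),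
      IsProbabilityMeasure M' ∧ M'.map Prod.fst = P ∧ M'.map Prod.snd = Q ∧
      r = ∫ p, (∑ i, (p.1 i - p.2 i) ^ 2) ∂M'} := by
    refine ⟨0, ?_⟩
    rintro r ⟨M', _, _, _, rfl⟩
    exact integral_nonneg fun p => Finset.sum_nonneg fun i _ => sq_nonneg _
  have hmem : (∫ p, c p ∂M) ∈ {r : ℝ | ∃ M' : Measure ((Fin m → ℝ) × (Fin m → ℝ)),
      IsProbabilityMeasure M' ∧ M'.map Prod.fst = P ∧ M'.map Prod.snd = Q ∧
      r = ∫ p, (∑ i, (p.1 i - p.2 i) ^ 2) ∂M'} := ⟨M, hM, h1, h2, rfl⟩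
  have hle1 : transportCost (fun x y => ∑ i, (x i - y i) ^ 2) P Q ≤ ∫ p, c p ∂M :=
    csInf_le hbdd hmem
  calc transportCost (fun x y => ∑ i, (x i - y i) ^ 2) P Q
      ≤ ∫ p, c p ∂M := hle1
    _ < ∫ p, cw p ∂M := hlt
    _ = transportCost (fun x y => ∑ i, (w i) ^ 2 * (x i - y i) ^ 2) P Q := hopt
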